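/- Let G=(V,E) be a finite simple graph, V = A ∪ B a partition, and suppose every vertex v ∈ V with odd degree satisfies: if v ∈ A then d_B(v) ≥ d_A(v), and if v ∈ B then d_A(v) ≥ d_B(v); assume additionally all degrees are odd (so all inequalities are strict). Then #E(A,B) ≥ |E|/2 + (|A|+|B|)/4. -/

import Mathlib

open Finset

variable {V : Type*} [Fintype V] [DecidableEq V]

/-- Number of neighbors of `v` lying in `S`. -/
def degIn (G : SimpleGraph V) [DecidableRel G.Adj] (v : V) (S : Finset V) : ℕ :=
  (S.filter (G.Adj v)).card

/-- Number of edges with one endpoint in `X` and the other in `Y`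
(each edge counted once; for `X = Y` this is the number of edges inside `X`). -/
def eBtw (G : SimpleGraph V) [DecidableRel G.Adj] (X Y : Finset V) : ℕ :=
  (G.edgeFinset.filter (fun e => ∃ x ∈ X, ∃ y ∈ Y, e = s(x, y))).card

lemma sum_degIn_eq (G : SimpleGraph V) [DecidableRel G.Adj] (X Y : Finset V) :
    ∑ x ∈ X, degIn G x Y = ((X ×ˢ Y).filter fun p => G.Adj p.1 p.2).card := by
  unfold degIn
  rw [Finset.card_filter, Finset.sum_product]
  simp only [Finset.card_filter]

lemma cross_count (G : SimpleGraph V) [DecidableRel G.Adj] (A B : Finset V)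
    (hAB : Disjoint A B) :
    (∑ a ∈ A, degIn G a B) + (∑ b ∈ B, degIn G b A) = 2 * eBtw G A B := by
  classical
  set H : SimpleGraph V :=
    { Adj := fun x y => G.Adj x y ∧ ((x ∈ A ∧ y ∈ B) ∨ (x ∈ B ∧ y ∈ A))
      symm := by
        refine ⟨fun x y h => ?_⟩
        exact ⟨h.1.symm, h.2.elim (fun h => Or.inr ⟨h.2, h.1⟩) (fun h => Or.inl ⟨h.2, h.1⟩)⟩
      loopless := ⟨fun x h => G.loopless.irrefl x h.1⟩ } with hH
  haveI : DecidableRel H.Adj := fun x y => by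
    simp only [hH]; infer_instance
  have hedge : H.edgeFinset =
      G.edgeFinset.filter (fun e => ∃ x ∈ A, ∃ y ∈ B, e = s(x, y)) := by
    ext e
    induction e with
    | _ u v =>
      simp only [SimpleGraph.mem_edgeFinset, Finset.mem_filter, SimpleGraph.mem_edgeSet, hH]
      constructor
      · rintro ⟨hadj, h | h⟩
        · exact ⟨hadj, u, h.1, v, h.2, rfl⟩
        · exact ⟨hadj, v, h.2, u, h.1, Sym2.eq_swap⟩
      · rintro ⟨hadj, x, hx, y, hy, hxy⟩
        refine ⟨hadj, ?_⟩
        rw [Sym2.eq_iff] at hxy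
        rcases hxy with ⟨rfl, rfl⟩ | ⟨rfl, rfl⟩
        · exact Or.inl ⟨hx, hy⟩
        · exact Or.inr ⟨hy, hx⟩
  have h2 := H.two_mul_card_edgeFinset
  have hcard : #(univ.filter fun (p : V × V) => H.Adj p.1 p.2)
      = (∑ a ∈ A, degIn G a B) + (∑ b ∈ B, degIn G b A) := by
    rw [sum_degIn_eq, sum_degIn_eq]
    have hsplit : (univ.filter fun (p : V × V) => H.Adj p.1 p.2)
        = ((A ×ˢ B).filter fun p => G.Adj p.1 p.2)
          ∪ ((B ×ˢ A).filter fun p => G.Adj p.1 p.2) := by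
      ext ⟨x, y⟩
      simp only [Finset.mem_filter, Finset.mem_union, Finset.mem_univ, true_and,
        Finset.mem_product, hH]
      tauto
    rw [hsplit, Finset.card_union_of_disjoint]
    rw [Finset.disjoint_left]
    rintro ⟨x, y⟩ hx hy
    simp only [Finset.mem_filter, Finset.mem_product] at hx hy
    exact Finset.disjoint_left.mp hAB hx.1.1 hy.1.1
  rw [← hcard, ← h2, hedge]
  rfl

theorem external_partition_cut_bound (G : SimpleGraph V) [DecidableRel G.Adj]
    (A B : Finset V)
    (hU : A ∪ B = Finset.univ) (hAB : Disjoint A B)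
    (hodd : ∀ v : V, Odd (G.degree v))
    (hA : ∀ a ∈ A, degIn G a A ≤ degIn G a B)
    (hB : ∀ b ∈ B, degIn G b B ≤ degIn G b A) :
    (G.edgeFinset.card : ℚ) / 2 + ((A.card : ℚ) + B.card) / 4 ≤ eBtw G A B := by
  classical
  have hdeg : ∀ v : V, G.degree v = degIn G v A + degIn G v B := by
    intro v
    rw [degIn, degIn, ← Finset.card_union_of_disjoint
      (Finset.disjoint_filter_filter hAB), ← Finset.filter_union, hU,
      ← SimpleGraph.neighborFinset_eq_filter]
    rfl
  -- strict inequalities from parity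
  have hA' : ∀ a ∈ A, degIn G a A + 1 ≤ degIn G a B := by
    intro a ha
    have h1 := hA a ha
    have h2 := hodd a
    rw [hdeg a, Nat.odd_iff] at h2
    omega
  have hB' : ∀ b ∈ B, degIn G b B + 1 ≤ degIn G b A := by
    intro b hb
    have h1 := hB b hb
    have h2 := hodd b
    rw [hdeg b, Nat.odd_iff] at h2
    omega
  have hsA : (∑ a ∈ A, degIn G a A) + A.card ≤ ∑ a ∈ A, degIn G a B := by
    calc (∑ a ∈ A, degIn G a A) + A.card = ∑ a ∈ A, (degIn G a A + 1) := by
          rw [Finset.sum_add_distrib]; simp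
      _ ≤ _ := Finset.sum_le_sum hA'
  have hsB : (∑ b ∈ B, degIn G b B) + B.card ≤ ∑ b ∈ B, degIn G b A := by
    calc (∑ b ∈ B, degIn G b B) + B.card = ∑ b ∈ B, (degIn G b B + 1) := by
          rw [Finset.sum_add_distrib]; simp
      _ ≤ _ := Finset.sum_le_sum hB'
  have hhs : 2 * G.edgeFinset.card =
      (∑ a ∈ A, degIn G a A) + (∑ a ∈ A, degIn G a B)
        + ((∑ b ∈ B, degIn G b A) + (∑ b ∈ B, degIn G b B)) := by
    rw [← G.sum_degrees_eq_twice_card_edges, ← hU,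
      Finset.sum_union hAB]
    simp_rw [hdeg, Finset.sum_add_distrib]
  have hcross := cross_count G A B hAB
  have key : 2 * G.edgeFinset.card + A.card + B.card ≤ 4 * eBtw G A B := by omega
  have : (2 * G.edgeFinset.card + A.card + B.card : ℚ) ≤ 4 * eBtw G A B := by
    exact_mod_cast key
  push_cast at this ⊢
  linarith
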